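/- Let P be a finite set of positive integers, m = min P, n ≥ 1, and suppose n - m ≤ i ≤ m - 1 (in particular n ≤ 2m - 1 and this range is nonempty). Then the equivalence class [i]_{P,n} under ≈_{P,n} is the singleton {i}. -/
import Mathlib


/-- minimum of a finite set of naturals (as `sInf`). -/
noncomputable def mP (P : Finset ℕ) : ℕ := sInf (↑P : Set ℕ)

/-- the generating relation `∼_{P,k}` on `{0,…,k-1}`. -/
def simRel (P : Finset ℕ) (k i j : ℕ) : Prop :=
  i < k ∧ j < k ∧ (i % mP P = j % mP P ∨
    ∃ i' j', i' < k ∧ j' < k ∧ i' % mP P = i % mP P ∧ j' % mP P = j % mP P ∧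
      (max i' j' - min i' j') ∈ P)

/-- the class of `i` under the equivalence closure `≈_{P,k}`. -/
def cls (P : Finset ℕ) (k i : ℕ) : Set ℕ := {j | Relation.EqvGen (simRel P k) i j}

/-- the FW-word: `FW P k i = min [i]_{P,k}`. -/
noncomputable def FW (P : Finset ℕ) (k : ℕ) : ℕ → ℕ := fun i => sInf (cls P k i)

/-- Euclidean reduction `Q = {p - m : p ∈ P, p ≠ m} ∪ {m}`. -/
noncomputable def Qred (P : Finset ℕ) : Finset ℕ :=
  ((P.erase (mP P)).image (fun p => p - mP P)) ∪ {mP P}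

/-- `p` is a period of the word `w` of length `n`. -/
def HasPeriodF {A : Type*} (w : ℕ → A) (n p : ℕ) : Prop :=
  ∀ i, i + p < n → w i = w (i + p)

theorem stmt4 (P : Finset ℕ) (hP : P.Nonempty) (hpos : ∀ p ∈ P, 0 < p)
    (n i : ℕ) (hn : 1 ≤ n) (h1 : n - mP P ≤ i) (h2 : i ≤ mP P - 1) (h3 : i < mP P) :
    cls P n i = {i} := by
  have hmem : mP P ∈ P := by
    have : (↑P : Set ℕ).Nonempty := ⟨hP.choose, hP.choose_spec⟩
    have := Nat.sInf_mem this
    simpa [mP] using this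
  have hm0 : 0 < mP P := hpos _ hmem
  have hle : ∀ p ∈ P, mP P ≤ p := fun p hp => Nat.sInf_le (by simpa using hp)
  have hni : n ≤ i + mP P := by omega
  have hmod : ∀ j, j < n → j % mP P = i → j = i := by
    intro j hj hji
    have hd := Nat.div_add_mod j (mP P)
    rcases Nat.eq_zero_or_pos (j / mP P) with h0 | h0
    · rw [h0, Nat.mul_zero] at hd
      omega
    · have h1m : 1 ≤ j / mP P := h0
      have : mP P * 1 ≤ mP P * (j / mP P) := Nat.mul_le_mul_left _ h1m
      rw [mul_one] at this
      omega
  have hi_mod : i % mP P = i := Nat.mod_eq_of_lt h3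
  have key : ∀ j, simRel P n i j → j = i := by
    rintro j ⟨hin, hjn, heq | ⟨i', j', hi', hj', hii, hjj, hp⟩⟩
    · exact hmod j hjn (by rw [← heq, hi_mod])
    · have hi'i : i' = i := hmod i' hi' (by rw [hii, hi_mod])
      have hpm := hle _ hp
      have hp0 := hpos _ hp
      exfalso
      rcases le_total i' j' with h | h
      · rw [max_eq_right h, min_eq_left h] at hpm hp0
        omega
      · rw [max_eq_left h, min_eq_right h] at hpm hp0
        omega
  have symmRel : ∀ a b, simRel P n a b → simRel P n b a := by
    rintro a b ⟨h1', h2', heq | ⟨i', j', hi', hj', hii, hjj, hp⟩⟩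
    · exact ⟨h2', h1', Or.inl heq.symm⟩
    · exact ⟨h2', h1', Or.inr ⟨j', i', hj', hi', hjj, hii, by rwa [max_comm, min_comm]⟩⟩
  have main : ∀ a b, Relation.EqvGen (simRel P n) a b → (a = i ↔ b = i) := by
    intro a b h
    induction h with
    | rel a b hab =>
        constructor
        · intro ha; subst ha; exact key b hab
        · intro hb; subst hb; exact key a (symmRel _ _ hab)
    | refl a => exact Iff.rfl
    | symm a b _ ih => exact ih.symm
    | trans a b c _ _ ih1 ih2 => exact ih1.trans ih2
  ext j
  simp only [cls, Set.mem_setOf_eq, Set.mem_singleton_iff]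
  constructor
  · intro h; exact (main i j h).mp rfl
  · rintro rfl; exact Relation.EqvGen.refl _
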